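/- Let Ω ⊆ ℝ³ be an open set and ω ∈ ℂ with ω ≠ 0. Let ε, μ, ξ, ζ : Ω → ℂ^{3×3} be of class C², and let E, H : Ω → ℂ³ and J_e, J_m : Ω → ℂ³ be of class C². Assume the bi-anisotropic Maxwell system holds pointwise on Ω: curl H = iω(εE + ξH) + J_e and curl E = −iω(ζE + μH) + J_m. Then for each k ∈ {1,2,3} the pair (E_k, H_k) of k-th components satisfies pointwise on Ω the coupled second-order system: −div(ε∇E_k + ξ∇H_k) = div((∂_k ε)E + (∂_k ξ)H − ε(e_k × (−iωζE − iωμH + J_m)) − ξ(e_k × (iωεE + iωξH + J_e)) − (i/ω) e_k div J_e), and −div(ζ∇E_k + μ∇H_k) = div((∂_k ζ)E + (∂_k μ)H − μ(e_k × (iωεE + iωξH + J_e)) + ζ(e_k × (iωζE + iωμH − J_m)) + (i/ω) e_k div J_m). -/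

import Mathlib

open Matrix MeasureTheory
open Topology

noncomputable section

/-- Partial derivative of a scalar function in the j-th coordinate direction. -/
def pd3 (j : Fin 3) (f : (Fin 3 → ℝ) → ℂ) (x : Fin 3 → ℝ) : ℂ :=
  fderiv ℝ f x (Pi.single j 1)

/-- Divergence of a vector field. -/
def vdiv (F : (Fin 3 → ℝ) → Fin 3 → ℂ) (x : Fin 3 → ℝ) : ℂ :=
  ∑ j : Fin 3, pd3 j (fun y => F y j) x

/-- Curl of a vector field. -/
def vcurl (F : (Fin 3 → ℝ) → Fin 3 → ℂ) (x : Fin 3 → ℝ) : Fin 3 → ℂ :=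
  ![pd3 1 (fun y => F y 2) x - pd3 2 (fun y => F y 1) x,
    pd3 2 (fun y => F y 0) x - pd3 0 (fun y => F y 2) x,
    pd3 0 (fun y => F y 1) x - pd3 1 (fun y => F y 0) x]

/-- Gradient of a scalar function. -/
def grad3 (u : (Fin 3 → ℝ) → ℂ) (x : Fin 3 → ℝ) : Fin 3 → ℂ := fun j => pd3 j u x

/-- Cross product on ℂ³. -/
def cross3 (a b : Fin 3 → ℂ) : Fin 3 → ℂ :=
  ![a 1 * b 2 - a 2 * b 1, a 2 * b 0 - a 0 * b 2, a 0 * b 1 - a 1 * b 0]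

/-- The k-th standard basis vector of ℝ³ viewed in ℂ³. -/
def e3 (k : Fin 3) : Fin 3 → ℂ := Pi.single k 1

/-- Entrywise partial derivative of a matrix field in the k-th direction. -/
def mpd3 (k : Fin 3) (a : (Fin 3 → ℝ) → Matrix (Fin 3) (Fin 3) ℂ) (x : Fin 3 → ℝ) :
    Matrix (Fin 3) (Fin 3) ℂ :=
  Matrix.of fun i j => pd3 k (fun y => a y i j) x

/-! ### Auxiliary lemmas about `pd3` -/

lemma pd3_congr {Ω : Set (Fin 3 → ℝ)} (hΩ : IsOpen Ω) {x : Fin 3 → ℝ} (hx : x ∈ Ω)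
    {f g : (Fin 3 → ℝ) → ℂ} (h : ∀ y ∈ Ω, f y = g y) (j : Fin 3) :
    pd3 j f x = pd3 j g x := by
  unfold pd3
  rw [Filter.EventuallyEq.fderiv_eq (Filter.eventuallyEq_of_mem (hΩ.mem_nhds hx) h)]

lemma pd3_add {f g : (Fin 3 → ℝ) → ℂ} {x : Fin 3 → ℝ}
    (hf : DifferentiableAt ℝ f x) (hg : DifferentiableAt ℝ g x) (j : Fin 3) :
    pd3 j (fun y => f y + g y) x = pd3 j f x + pd3 j g x := by
  unfold pd3; rw [fderiv_fun_add hf hg]; rfl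

lemma pd3_sub {f g : (Fin 3 → ℝ) → ℂ} {x : Fin 3 → ℝ}
    (hf : DifferentiableAt ℝ f x) (hg : DifferentiableAt ℝ g x) (j : Fin 3) :
    pd3 j (fun y => f y - g y) x = pd3 j f x - pd3 j g x := by
  unfold pd3; rw [fderiv_fun_sub hf hg]; rfl

lemma pd3_const_mul {f : (Fin 3 → ℝ) → ℂ} {x : Fin 3 → ℝ}
    (hf : DifferentiableAt ℝ f x) (c : ℂ) (j : Fin 3) :
    pd3 j (fun y => c * f y) x = c * pd3 j f x := by
  unfold pd3; rw [fderiv_const_mul hf]; rfl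

lemma pd3_mul {f g : (Fin 3 → ℝ) → ℂ} {x : Fin 3 → ℝ}
    (hf : DifferentiableAt ℝ f x) (hg : DifferentiableAt ℝ g x) (j : Fin 3) :
    pd3 j (fun y => f y * g y) x = pd3 j f x * g x + f x * pd3 j g x := by
  unfold pd3; rw [fderiv_fun_mul hf hg]; simp; ring

lemma pd3_sum {ι : Type*} (s : Finset ι) {f : ι → (Fin 3 → ℝ) → ℂ} {x : Fin 3 → ℝ}
    (hf : ∀ i ∈ s, DifferentiableAt ℝ (f i) x) (j : Fin 3) :
    pd3 j (fun y => ∑ i ∈ s, f i y) x = ∑ i ∈ s, pd3 j (f i) x := by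
  unfold pd3; rw [fderiv_fun_sum hf]; simp

lemma diffAt_of_cd {Ω : Set (Fin 3 → ℝ)} (hΩ : IsOpen Ω) {F : Type*}
    [NormedAddCommGroup F] [NormedSpace ℝ F]
    {f : (Fin 3 → ℝ) → F} {n : WithTop ℕ∞} (hf : ContDiffOn ℝ n f Ω) (hn : 1 ≤ n)
    {x : Fin 3 → ℝ} (hx : x ∈ Ω) : DifferentiableAt ℝ f x :=
  (hf.differentiableOn (one_pos.trans_le hn).ne').differentiableAt (hΩ.mem_nhds hx)

lemma pd3_contDiffOn {Ω : Set (Fin 3 → ℝ)} (hΩ : IsOpen Ω) {f : (Fin 3 → ℝ) → ℂ}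
    (hf : ContDiffOn ℝ 2 f Ω) (j : Fin 3) :
    ContDiffOn ℝ 1 (fun y => pd3 j f y) Ω := by
  have h1 : ContDiffOn ℝ 1 (fderiv ℝ f) Ω :=
    hf.fderiv_of_isOpen hΩ (by norm_num)
  exact h1.clm_apply contDiffOn_const

lemma pd3_comm {Ω : Set (Fin 3 → ℝ)} (hΩ : IsOpen Ω) {f : (Fin 3 → ℝ) → ℂ}
    (hf : ContDiffOn ℝ 2 f Ω) {x : Fin 3 → ℝ} (hx : x ∈ Ω) (j k : Fin 3) :
    pd3 j (fun y => pd3 k f y) x = pd3 k (fun y => pd3 j f y) x := by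
  have hd1 : ContDiffOn ℝ 1 (fderiv ℝ f) Ω := hf.fderiv_of_isOpen hΩ (by norm_num)
  have hdx : DifferentiableAt ℝ (fderiv ℝ f) x := diffAt_of_cd hΩ hd1 le_rfl hx
  have hev : ∀ᶠ y in 𝓝 x, HasFDerivAt f (fderiv ℝ f y) y := by
    filter_upwards [hΩ.mem_nhds hx] with y hy
    exact (diffAt_of_cd hΩ hf (by norm_num) hy).hasFDerivAt
  have hsym := second_derivative_symmetric_of_eventually hev hdx.hasFDerivAt
  have key : ∀ a b : Fin 3, pd3 a (fun y => pd3 b f y) x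
      = fderiv ℝ (fderiv ℝ f) x (Pi.single a 1) (Pi.single b 1) := by
    intro a b
    unfold pd3
    rw [fderiv_clm_apply hdx (differentiableAt_const _)]
    simp
  rw [key, key, hsym]

/-! ### Divergence and curl lemmas -/

lemma vdiv_contDiffOn {Ω : Set (Fin 3 → ℝ)} (hΩ : IsOpen Ω) {J : (Fin 3 → ℝ) → Fin 3 → ℂ}
    (hJ : ∀ i, ContDiffOn ℝ 2 (fun y => J y i) Ω) :
    ContDiffOn ℝ 1 (vdiv J) Ω := by
  unfold vdiv
  exact ContDiffOn.sum (fun j _ => pd3_contDiffOn hΩ (hJ j) j)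

lemma vdiv_vcurl_eq_zero {Ω : Set (Fin 3 → ℝ)} (hΩ : IsOpen Ω)
    {F : (Fin 3 → ℝ) → Fin 3 → ℂ} (hF : ∀ i, ContDiffOn ℝ 2 (fun y => F y i) Ω)
    {x : Fin 3 → ℝ} (hx : x ∈ Ω) : vdiv (vcurl F) x = 0 := by
  have hd : ∀ a b : Fin 3, DifferentiableAt ℝ (fun y => pd3 a (fun z => F z b) y) x :=
    fun a b => diffAt_of_cd hΩ (pd3_contDiffOn hΩ (hF b) a) le_rfl hx
  have c0 : (fun y => vcurl F y 0)
      = fun y => pd3 1 (fun z => F z 2) y - pd3 2 (fun z => F z 1) y := by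
    funext y; simp [vcurl]
  have c1 : (fun y => vcurl F y 1)
      = fun y => pd3 2 (fun z => F z 0) y - pd3 0 (fun z => F z 2) y := by
    funext y; simp [vcurl]
  have c2 : (fun y => vcurl F y 2)
      = fun y => pd3 0 (fun z => F z 1) y - pd3 1 (fun z => F z 0) y := by
    funext y; simp [vcurl]
  simp only [vdiv, Fin.sum_univ_three]
  rw [c0, c1, c2, pd3_sub (hd 1 2) (hd 2 1) 0, pd3_sub (hd 2 0) (hd 0 2) 1,
    pd3_sub (hd 0 1) (hd 1 0) 2,
    pd3_comm hΩ (hF 2) hx 0 1, pd3_comm hΩ (hF 1) hx 0 2, pd3_comm hΩ (hF 0) hx 1 2]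
  ring

lemma div_rel {Ω : Set (Fin 3 → ℝ)} (hΩ : IsOpen Ω)
    {W D J : (Fin 3 → ℝ) → Fin 3 → ℂ}
    (hW : ∀ i, ContDiffOn ℝ 2 (fun y => W y i) Ω)
    (hD : ∀ i, ContDiffOn ℝ 2 (fun y => D y i) Ω)
    (hJ : ∀ i, ContDiffOn ℝ 2 (fun y => J y i) Ω)
    {s : ℂ} (hs : s ≠ 0)
    (hM : ∀ y ∈ Ω, vcurl W y = s • D y + J y) :
    ∀ y ∈ Ω, vdiv D y = -s⁻¹ * vdiv J y := by
  intro y hy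
  have h0 : vdiv (vcurl W) y = 0 := vdiv_vcurl_eq_zero hΩ hW hy
  have h1 : vdiv (vcurl W) y = s * vdiv D y + vdiv J y := by
    unfold vdiv
    have hc : ∀ j : Fin 3, pd3 j (fun z => vcurl W z j) y
        = s * pd3 j (fun z => D z j) y + pd3 j (fun z => J z j) y := by
      intro j
      have hDd : DifferentiableAt ℝ (fun z => D z j) y :=
        diffAt_of_cd hΩ (hD j) (by norm_num) hy
      have hJd : DifferentiableAt ℝ (fun z => J z j) y :=
        diffAt_of_cd hΩ (hJ j) (by norm_num) hy
      rw [pd3_congr hΩ hy (f := fun z => vcurl W z j) (g := fun z => s * D z j + J z j)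
        (fun z hz => by rw [hM z hz]; simp) j,
        pd3_add (hDd.const_mul s) hJd j, pd3_const_mul hDd s j]
    rw [Finset.sum_congr rfl fun j _ => hc j, Finset.sum_add_distrib, Finset.mul_sum]
  rw [h0] at h1
  field_simp
  linear_combination -h1

/-! ### The key abstract computation -/

lemma core {Ω : Set (Fin 3 → ℝ)} (hΩ : IsOpen Ω) {x : Fin 3 → ℝ} (hx : x ∈ Ω) (k : Fin 3)
    (P Q D J : (Fin 3 → ℝ) → Fin 3 → ℂ) (c : ℂ)
    (hD : ∀ i, ContDiffOn ℝ 2 (fun y => D y i) Ω)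
    (hJ : ∀ i, ContDiffOn ℝ 2 (fun y => J y i) Ω)
    (hDJ : ∀ y ∈ Ω, vdiv D y = c * vdiv J y)
    (hP : ∀ i, DifferentiableAt ℝ (fun y => P y i) x)
    (hPQ : ∀ y ∈ Ω, ∀ i, P y i + Q y i
      = pd3 k (fun z => D z i) y - c * vdiv J y * e3 k i) :
    -vdiv P x = vdiv Q x := by
  have hvJ : ContDiffOn ℝ 1 (vdiv J) Ω := vdiv_contDiffOn hΩ hJ
  have hvJx : DifferentiableAt ℝ (vdiv J) x := diffAt_of_cd hΩ hvJ le_rfl hx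
  have hpdD : ∀ i j : Fin 3, DifferentiableAt ℝ (fun y => pd3 j (fun z => D z i) y) x :=
    fun i j => diffAt_of_cd hΩ (pd3_contDiffOn hΩ (hD i) j) le_rfl hx
  have hRdiff : ∀ i, DifferentiableAt ℝ
      (fun y => pd3 k (fun z => D z i) y - c * vdiv J y * e3 k i) x :=
    fun i => (hpdD i k).sub ((hvJx.const_mul c).mul_const (e3 k i))
  have hQd : ∀ i, DifferentiableAt ℝ (fun y => Q y i) x := by
    intro i
    have heq : (fun y => Q y i) =ᶠ[𝓝 x]
        fun y => (pd3 k (fun z => D z i) y - c * vdiv J y * e3 k i) - P y i := by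
      filter_upwards [hΩ.mem_nhds hx] with y hy
      have := hPQ y hy i
      linear_combination this
    exact heq.differentiableAt_iff.2 ((hRdiff i).sub (hP i))
  have key : vdiv P x + vdiv Q x = 0 := by
    have h1 : vdiv P x + vdiv Q x = ∑ j : Fin 3, pd3 j (fun y => P y j + Q y j) x := by
      unfold vdiv
      rw [← Finset.sum_add_distrib]
      exact Finset.sum_congr rfl fun j _ => (pd3_add (hP j) (hQd j) j).symm
    have h2 : ∀ j : Fin 3, pd3 j (fun y => P y j + Q y j) x
        = pd3 k (fun y => pd3 j (fun z => D z j) y) x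
          - (c * e3 k j) * pd3 j (vdiv J) x := by
      intro j
      rw [pd3_congr hΩ hx (fun y hy => hPQ y hy j) j,
        pd3_sub (hpdD j k) ((hvJx.const_mul c).mul_const (e3 k j)) j,
        pd3_comm hΩ (hD j) hx j k]
      congr 1
      have : (fun y => c * vdiv J y * e3 k j) = fun y => (c * e3 k j) * vdiv J y := by
        funext y; ring
      rw [this, pd3_const_mul hvJx (c * e3 k j) j]
    rw [h1, Finset.sum_congr rfl fun j _ => h2 j, Finset.sum_sub_distrib]
    have h3 : ∑ j : Fin 3, pd3 k (fun y => pd3 j (fun z => D z j) y) x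
        = pd3 k (vdiv D) x := by
      unfold vdiv
      rw [pd3_sum Finset.univ
        (fun j _ => diffAt_of_cd hΩ (pd3_contDiffOn hΩ (hD j) j) le_rfl hx) k]
    have h4 : pd3 k (vdiv D) x = c * pd3 k (vdiv J) x := by
      rw [pd3_congr hΩ hx hDJ k, pd3_const_mul hvJx c k]
    have h5 : ∑ j : Fin 3, (c * e3 k j) * pd3 j (vdiv J) x = c * pd3 k (vdiv J) x := by
      simp only [e3, Pi.single_apply]
      fin_cases k <;> simp [Fin.sum_univ_three]
    rw [h3, h4, h5, sub_self]
  linear_combination -key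

/-! ### Pointwise vector identities -/

lemma gradcurl (E : (Fin 3 → ℝ) → Fin 3 → ℂ) (x : Fin 3 → ℝ) (k i : Fin 3) :
    cross3 (e3 k) (vcurl E x) i
      = pd3 i (fun y => E y k) x - pd3 k (fun y => E y i) x := by
  fin_cases k <;> fin_cases i <;>
    simp [cross3, e3, vcurl, Pi.single_apply] <;> ring

lemma cross3_neg (a v : Fin 3 → ℂ) (i : Fin 3) :
    cross3 a (fun l => -v l) i = -cross3 a v i := by
  fin_cases i <;> (simp [cross3]; ring)

/-! ### Smoothness/differentiability of the composite fields -/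

lemma mulVec_cd {Ω : Set (Fin 3 → ℝ)} {a : (Fin 3 → ℝ) → Matrix (Fin 3) (Fin 3) ℂ}
    {F : (Fin 3 → ℝ) → Fin 3 → ℂ}
    (ha : ∀ i j, ContDiffOn ℝ 2 (fun x => a x i j) Ω)
    (hF : ∀ i, ContDiffOn ℝ 2 (fun y => F y i) Ω) (i : Fin 3) :
    ContDiffOn ℝ 2 (fun y => (a y *ᵥ F y) i) Ω := by
  have : (fun y => (a y *ᵥ F y) i) = fun y => ∑ l : Fin 3, a y i l * F y l := by
    funext y; simp [Matrix.mulVec, dotProduct]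
  rw [this]
  exact ContDiffOn.sum fun l _ => (ha i l).mul (hF l)

lemma mulVec_grad_diffAt {Ω : Set (Fin 3 → ℝ)} (hΩ : IsOpen Ω)
    {a : (Fin 3 → ℝ) → Matrix (Fin 3) (Fin 3) ℂ} {u : (Fin 3 → ℝ) → ℂ}
    (ha : ∀ i j, ContDiffOn ℝ 2 (fun x => a x i j) Ω)
    (hu : ContDiffOn ℝ 2 u Ω) {x : Fin 3 → ℝ} (hx : x ∈ Ω) (i : Fin 3) :
    DifferentiableAt ℝ (fun y => (a y *ᵥ grad3 u y) i) x := by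
  have : (fun y => (a y *ᵥ grad3 u y) i) = fun y => ∑ l : Fin 3, a y i l * pd3 l u y := by
    funext y; simp [Matrix.mulVec, dotProduct, grad3]
  rw [this]
  exact DifferentiableAt.fun_sum fun l _ =>
    (diffAt_of_cd hΩ (ha i l) (by norm_num) hx).mul
      (diffAt_of_cd hΩ (pd3_contDiffOn hΩ hu l) le_rfl hx)

lemma leibniz_D {Ω : Set (Fin 3 → ℝ)} (hΩ : IsOpen Ω)
    {a b : (Fin 3 → ℝ) → Matrix (Fin 3) (Fin 3) ℂ}
    {E H : (Fin 3 → ℝ) → Fin 3 → ℂ}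
    (ha : ∀ i j, ContDiffOn ℝ 2 (fun x => a x i j) Ω)
    (hb : ∀ i j, ContDiffOn ℝ 2 (fun x => b x i j) Ω)
    (hE : ∀ i, ContDiffOn ℝ 2 (fun y => E y i) Ω)
    (hH : ∀ i, ContDiffOn ℝ 2 (fun y => H y i) Ω)
    {y : Fin 3 → ℝ} (hy : y ∈ Ω) (k i : Fin 3) :
    pd3 k (fun z => (a z *ᵥ E z + b z *ᵥ H z) i) y
      = ∑ l : Fin 3, (pd3 k (fun z => a z i l) y * E y l
          + a y i l * pd3 k (fun z => E z l) y
          + pd3 k (fun z => b z i l) y * H y l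
          + b y i l * pd3 k (fun z => H z l) y) := by
  have had : ∀ i l, DifferentiableAt ℝ (fun z => a z i l) y :=
    fun i l => diffAt_of_cd hΩ (ha i l) (by norm_num) hy
  have hbd : ∀ i l, DifferentiableAt ℝ (fun z => b z i l) y :=
    fun i l => diffAt_of_cd hΩ (hb i l) (by norm_num) hy
  have hEd : ∀ l, DifferentiableAt ℝ (fun z => E z l) y :=
    fun l => diffAt_of_cd hΩ (hE l) (by norm_num) hy
  have hHd : ∀ l, DifferentiableAt ℝ (fun z => H z l) y :=
    fun l => diffAt_of_cd hΩ (hH l) (by norm_num) hy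
  have hrw : (fun z => (a z *ᵥ E z + b z *ᵥ H z) i)
      = fun z => ∑ l : Fin 3, (a z i l * E z l + b z i l * H z l) := by
    funext z
    simp [Matrix.mulVec, dotProduct, Finset.sum_add_distrib]
  rw [hrw, pd3_sum Finset.univ (f := fun l z => a z i l * E z l + b z i l * H z l)
    (fun l _ => ((had i l).mul (hEd l)).add ((hbd i l).mul (hHd l))) k]
  refine Finset.sum_congr rfl fun l _ => ?_
  rw [pd3_add (f := fun z => a z i l * E z l) (g := fun z => b z i l * H z l) ((had i l).mul (hEd l)) ((hbd i l).mul (hHd l)) k,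
    pd3_mul (had i l) (hEd l) k, pd3_mul (hbd i l) (hHd l) k]
  ring

/-- Strong form of the coupled elliptic system satisfied by the components of the
electromagnetic fields in bi-anisotropic media (Proposition A.1, strong form). -/
theorem stmt_10
    (Ω : Set (Fin 3 → ℝ)) (hΩ : IsOpen Ω) (ω : ℂ) (hω : ω ≠ 0)
    (ε μ ξ ζ : (Fin 3 → ℝ) → Matrix (Fin 3) (Fin 3) ℂ)
    (E H Je Jm : (Fin 3 → ℝ) → Fin 3 → ℂ)
    (hε : ∀ i j, ContDiffOn ℝ 2 (fun x => ε x i j) Ω)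
    (hμ : ∀ i j, ContDiffOn ℝ 2 (fun x => μ x i j) Ω)
    (hξ : ∀ i j, ContDiffOn ℝ 2 (fun x => ξ x i j) Ω)
    (hζ : ∀ i j, ContDiffOn ℝ 2 (fun x => ζ x i j) Ω)
    (hE : ContDiffOn ℝ 2 E Ω) (hH : ContDiffOn ℝ 2 H Ω)
    (hJe : ContDiffOn ℝ 2 Je Ω) (hJm : ContDiffOn ℝ 2 Jm Ω)
    (hM1 : ∀ x ∈ Ω,
      vcurl H x = (Complex.I * ω) • (ε x *ᵥ E x + ξ x *ᵥ H x) + Je x)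
    (hM2 : ∀ x ∈ Ω,
      vcurl E x = -((Complex.I * ω) • (ζ x *ᵥ E x + μ x *ᵥ H x)) + Jm x) :
    ∀ x ∈ Ω, ∀ k : Fin 3,
      (-vdiv (fun y =>
          ε y *ᵥ grad3 (fun z => E z k) y + ξ y *ᵥ grad3 (fun z => H z k) y) x
        = vdiv (fun y =>
            mpd3 k ε y *ᵥ E y + mpd3 k ξ y *ᵥ H y
            - ε y *ᵥ cross3 (e3 k)
                (-((Complex.I * ω) • (ζ y *ᵥ E y)) - (Complex.I * ω) • (μ y *ᵥ H y) + Jm y)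
            - ξ y *ᵥ cross3 (e3 k)
                ((Complex.I * ω) • (ε y *ᵥ E y) + (Complex.I * ω) • (ξ y *ᵥ H y) + Je y)
            - ((Complex.I / ω) * vdiv Je y) • e3 k) x) ∧
      (-vdiv (fun y =>
          ζ y *ᵥ grad3 (fun z => E z k) y + μ y *ᵥ grad3 (fun z => H z k) y) x
        = vdiv (fun y =>
            mpd3 k ζ y *ᵥ E y + mpd3 k μ y *ᵥ H y
            - μ y *ᵥ cross3 (e3 k)
                ((Complex.I * ω) • (ε y *ᵥ E y) + (Complex.I * ω) • (ξ y *ᵥ H y) + Je y)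
            + ζ y *ᵥ cross3 (e3 k)
                ((Complex.I * ω) • (ζ y *ᵥ E y) + (Complex.I * ω) • (μ y *ᵥ H y) - Jm y)
            + ((Complex.I / ω) * vdiv Jm y) • e3 k) x) := by
  intro x hx k
  have hEc : ∀ i, ContDiffOn ℝ 2 (fun y => E y i) Ω := fun i => contDiffOn_pi.1 hE i
  have hHc : ∀ i, ContDiffOn ℝ 2 (fun y => H y i) Ω := fun i => contDiffOn_pi.1 hH i
  have hJec : ∀ i, ContDiffOn ℝ 2 (fun y => Je y i) Ω := fun i => contDiffOn_pi.1 hJe i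
  have hJmc : ∀ i, ContDiffOn ℝ 2 (fun y => Jm y i) Ω := fun i => contDiffOn_pi.1 hJm i
  have hIω : Complex.I * ω ≠ 0 := mul_ne_zero Complex.I_ne_zero hω
  constructor
  · -- first equation
    have hD1 : ∀ i, ContDiffOn ℝ 2 (fun y => (ε y *ᵥ E y + ξ y *ᵥ H y) i) Ω :=
      fun i => (mulVec_cd hε hEc i).add (mulVec_cd hξ hHc i)
    refine core hΩ hx k _ _ (fun y => ε y *ᵥ E y + ξ y *ᵥ H y) Je (Complex.I / ω)
      hD1 hJec ?_ ?_ ?_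
    · -- divergence relation
      intro y hy
      rw [div_rel hΩ hHc hD1 hJec hIω hM1 y hy]
      congr 1
      rw [div_eq_mul_inv, mul_inv, Complex.inv_I]
      ring
    · intro i
      exact (mulVec_grad_diffAt hΩ hε (hEc k) hx i).add
        (mulVec_grad_diffAt hΩ hξ (hHc k) hx i)
    · -- pointwise identity
      intro y hy i
      have e2 : -((Complex.I * ω) • (ζ y *ᵥ E y)) - (Complex.I * ω) • (μ y *ᵥ H y) + Jm y
          = vcurl E y := by
        rw [hM2 y hy]
        funext l
        simp only [Pi.add_apply, Pi.sub_apply, Pi.neg_apply, Pi.smul_apply, smul_eq_mul]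
        ring
      have e1 : (Complex.I * ω) • (ε y *ᵥ E y) + (Complex.I * ω) • (ξ y *ᵥ H y) + Je y
          = vcurl H y := by
        rw [hM1 y hy]
        funext l
        simp only [Pi.add_apply, Pi.smul_apply, smul_eq_mul]
        ring
      rw [e2, e1, leibniz_D hΩ hε hξ hEc hHc hy k i]
      simp only [Pi.add_apply, Pi.sub_apply, Pi.smul_apply, smul_eq_mul, Matrix.mulVec,
        dotProduct, mpd3, Matrix.of_apply, grad3, Fin.sum_univ_three, gradcurl]
      ring
  · -- second equation
    have hD2 : ∀ i, ContDiffOn ℝ 2 (fun y => (ζ y *ᵥ E y + μ y *ᵥ H y) i) Ω :=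
      fun i => (mulVec_cd hζ hEc i).add (mulVec_cd hμ hHc i)
    refine core hΩ hx k _ _ (fun y => ζ y *ᵥ E y + μ y *ᵥ H y) Jm (-(Complex.I / ω))
      hD2 hJmc ?_ ?_ ?_
    · -- divergence relation
      intro y hy
      have hM2' : ∀ y ∈ Ω, vcurl E y
          = (-(Complex.I * ω)) • ((fun y => ζ y *ᵥ E y + μ y *ᵥ H y) y) + Jm y := by
        intro z hz
        rw [hM2 z hz, neg_smul]
      rw [div_rel hΩ hEc hD2 hJmc (neg_ne_zero.2 hIω) hM2' y hy]
      congr 1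
      rw [inv_neg, neg_neg, mul_inv, Complex.inv_I, div_eq_mul_inv]
      ring
    · intro i
      exact (mulVec_grad_diffAt hΩ hζ (hEc k) hx i).add
        (mulVec_grad_diffAt hΩ hμ (hHc k) hx i)
    · -- pointwise identity
      intro y hy i
      have e2 : (Complex.I * ω) • (ζ y *ᵥ E y) + (Complex.I * ω) • (μ y *ᵥ H y) - Jm y
          = fun l => -(vcurl E y l) := by
        funext l
        have h := congrFun (hM2 y hy) l
        simp only [Pi.add_apply, Pi.sub_apply, Pi.neg_apply, Pi.smul_apply, smul_eq_mul] at h ⊢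
        linear_combination h
      have e1 : (Complex.I * ω) • (ε y *ᵥ E y) + (Complex.I * ω) • (ξ y *ᵥ H y) + Je y
          = vcurl H y := by
        rw [hM1 y hy]
        funext l
        simp only [Pi.add_apply, Pi.smul_apply, smul_eq_mul]
        ring
      rw [e2, e1, leibniz_D hΩ hζ hμ hEc hHc hy k i]
      simp only [Pi.add_apply, Pi.sub_apply, Pi.smul_apply, smul_eq_mul, Matrix.mulVec,
        dotProduct, mpd3, Matrix.of_apply, grad3, Fin.sum_univ_three, cross3_neg,
        gradcurl]
      ring

end
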